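/- Let k ≥ 2 be an integer and a, b ∈ ℕ with [a,b] ∉ kS₁. If F ∈ full_{a,b}(kS₁), then E₁(F), E₂(F), ..., E_{k-1}(F) are all full Schreier sets (i.e., each is nonempty with |E_i(F)| = min E_i(F)). -/

import Mathlib

open Finset

/-- `F < G` for finite sets: every element of `F` is below every element of `G`. -/
def FinsetLT (F G : Finset ℕ) : Prop := ∀ x ∈ F, ∀ y ∈ G, x < y

/-- Membership in the Schreier family `S₁`: a finite set of positive integers
with `|F| ≤ min F` (the empty set belongs trivially). -/
def IsSchreier (F : Finset ℕ) : Prop := ∀ n ∈ F, 0 < n ∧ F.card ≤ n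

/-- `F` is a union of at most `d` sets `F₁ < F₂ < ⋯`, each in the family `P`. -/
def Combine (P : Finset ℕ → Prop) (d : ℕ) (F : Finset ℕ) : Prop :=
  ∃ L : List (Finset ℕ), L.length ≤ d ∧ L.Pairwise FinsetLT ∧
    (∀ G ∈ L, P G) ∧ L.foldr (· ∪ ·) ∅ = F

/-- Membership in `S₂`. -/
def MemS2 (F : Finset ℕ) : Prop :=
  F = ∅ ∨ ∃ h : F.Nonempty, Combine IsSchreier (F.min' h) F

/-- Membership in `S₃`. -/
def MemS3 (F : Finset ℕ) : Prop :=
  F = ∅ ∨ ∃ h : F.Nonempty, Combine MemS2 (F.min' h) F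

/-- `F` is a maximal member of the family `P` (among sets of positive integers). -/
def IsFull (P : Finset ℕ → Prop) (F : Finset ℕ) : Prop :=
  P F ∧ ∀ n : ℕ, 0 < n → n ∉ F → ¬ P (insert n F)

/-- `F ∈ full_{a,b}(P)`. -/
def FullAB (P : Finset ℕ → Prop) (a b : ℕ) (F : Finset ℕ) : Prop :=
  P F ∧ F ⊆ Finset.Icc a b ∧ a ∈ F ∧
    ∀ n ∈ Finset.Icc a b, n ∉ F → ¬ P (insert n F)

/-- The tower function `τ`. -/
def tau : ℕ → ℕ → ℕ
  | 0, a => a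
  | i + 1, a => 2 ^ tau i a

/-- `E₁(F)`: `F` itself if `|F| ≤ min F`, otherwise the `min F` smallest elements of `F`. -/
def E1 (F : Finset ℕ) : Finset ℕ :=
  if h : F.Nonempty then ((F.sort (· ≤ ·)).take (F.min' h)).toFinset else ∅

/-- Union of the first `i` greedy pieces. -/
def Eacc : ℕ → Finset ℕ → Finset ℕ
  | 0, _ => ∅
  | i + 1, F => Eacc i F ∪ E1 (F \ Eacc i F)

/-- The `i`-th greedy piece `E_i(F)` (for `i ≥ 1`). -/
def Epiece (i : ℕ) (F : Finset ℕ) : Finset ℕ := E1 (F \ Eacc (i - 1) F)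

open Classical in
/-- `E₁*(F)`: `F` itself if `F ∈ S₂`, otherwise `E₁(F) ∪ ⋯ ∪ E_{min F}(F)`. -/
noncomputable def E1star (F : Finset ℕ) : Finset ℕ :=
  if MemS2 F then F
  else if h : F.Nonempty then Eacc (F.min' h) F else ∅

/-- Union of the first `i` starred greedy pieces. -/
noncomputable def EaccStar : ℕ → Finset ℕ → Finset ℕ
  | 0, _ => ∅
  | i + 1, F => EaccStar i F ∪ E1star (F \ EaccStar i F)

/-- The `i`-th starred greedy piece `E_i*(F)` (for `i ≥ 1`). -/
noncomputable def EpieceStar (i : ℕ) (F : Finset ℕ) : Finset ℕ :=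
  E1star (F \ EaccStar (i - 1) F)

lemma mem_foldr_union {L : List (Finset ℕ)} {x : ℕ} :
    x ∈ L.foldr (· ∪ ·) ∅ ↔ ∃ G ∈ L, x ∈ G := by
  induction L with
  | nil => simp
  | cons G L ih => simp [ih]

lemma E1_subset (G : Finset ℕ) : E1 G ⊆ G := by
  unfold E1
  split
  · intro x hx
    simp only [List.mem_toFinset] at hx
    exact (Finset.mem_sort (α := ℕ) (· ≤ ·)).1 (List.mem_of_mem_take hx)
  · intro x hx; simp at hx

lemma E1_card {G : Finset ℕ} (h : G.Nonempty) :
    (E1 G).card = min (G.min' h) G.card := by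
  unfold E1
  rw [dif_pos h,
    List.toFinset_card_of_nodup ((Finset.sort_nodup _ _).sublist (List.take_sublist _ _))]
  simp [List.length_take]

lemma min'_mem_E1 {G : Finset ℕ} (h : G.Nonempty) (hpos : 0 < G.min' h) :
    G.min' h ∈ E1 G := by
  unfold E1; rw [dif_pos h]
  simp only [List.mem_toFinset]
  have hlen : 0 < (G.sort (· ≤ ·)).length := by
    rw [Finset.length_sort]; exact Finset.card_pos.2 h
  have hlt : 0 < (List.take (G.min' h) (G.sort (· ≤ ·))).length := by
    rw [List.length_take]; exact lt_min hpos hlen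
  have hm := List.getElem_mem hlt
  rwa [List.getElem_take, Finset.sorted_zero_eq_min'] at hm

lemma E1_initial {G : Finset ℕ} : ∀ x ∈ E1 G, ∀ y ∈ G, y ∉ E1 G → x < y := by
  intro x hx y hy hyn
  by_cases h : G.Nonempty
  · unfold E1 at hx hyn
    rw [dif_pos h] at hx hyn
    simp only [List.mem_toFinset] at hx hyn
    obtain ⟨i, hi, hxi⟩ := List.mem_iff_getElem.1 hx
    obtain ⟨j, hj, hyj⟩ := List.mem_iff_getElem.1 ((Finset.mem_sort (α := ℕ) (· ≤ ·)).2 hy)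
    rw [List.getElem_take] at hxi
    rw [List.length_take] at hi
    have him : i < G.min' h := hi.trans_le (min_le_left _ _)
    have hjm : ¬ j < G.min' h := by
      intro hjm
      apply hyn
      have hj' : j < (List.take (G.min' h) (G.sort (· ≤ ·))).length := by
        rw [List.length_take]; exact lt_min hjm hj
      have hm := List.getElem_mem hj'
      rwa [List.getElem_take, hyj] at hm
    have hij : i < j := him.trans_le (not_lt.1 hjm)
    have hlt := (Finset.sortedLT_sort G).strictMono_get
      (a := ⟨i, hij.trans hj⟩) (b := ⟨j, hj⟩) hij
    simp only [List.get_eq_getElem] at hlt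
    rwa [hxi, hyj] at hlt
  · exact absurd hy (by simp [Finset.not_nonempty_iff_eq_empty.1 h])

lemma foldr_union_append (L M : List (Finset ℕ)) :
    (L ++ M).foldr (· ∪ ·) ∅ = L.foldr (· ∪ ·) ∅ ∪ M.foldr (· ∪ ·) ∅ := by
  induction L with
  | nil => simp
  | cons G L ih => simp [ih, Finset.union_assoc]

lemma eacc_subset (F : Finset ℕ) : ∀ j, Eacc j F ⊆ F := by
  intro j
  induction j with
  | zero => simp [Eacc]
  | succ j ih =>
    intro x hx
    rcases Finset.mem_union.1 hx with h | h
    · exact ih h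
    · exact (Finset.mem_sdiff.1 (E1_subset _ h)).1

lemma isSchreier_E1 {F : Finset ℕ} (hpos : ∀ x ∈ F, 0 < x) {G : Finset ℕ}
    (hG : G ⊆ F) : IsSchreier (E1 G) := by
  intro m hm
  have hmG : m ∈ G := E1_subset G hm
  have h : G.Nonempty := ⟨m, hmG⟩
  refine ⟨hpos m (hG hmG), ?_⟩
  rw [E1_card h]
  exact le_trans (min_le_left _ _) (Finset.min'_le G m hmG)

lemma eacc_decomp (F : Finset ℕ) (hpos : ∀ x ∈ F, 0 < x) (j : ℕ) :
    ∃ L : List (Finset ℕ), L.length = j ∧ L.Pairwise FinsetLT ∧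
      (∀ G ∈ L, IsSchreier G) ∧ L.foldr (· ∪ ·) ∅ = Eacc j F ∧
      (∀ x ∈ Eacc j F, ∀ y ∈ F \ Eacc j F, x < y) := by
  induction j with
  | zero => exact ⟨[], rfl, List.Pairwise.nil, by simp, by simp [Eacc], by simp [Eacc]⟩
  | succ j ih =>
    obtain ⟨L, hlen, hpw, hsch, hfold, hord⟩ := ih
    set R := F \ Eacc j F with hRdef
    refine ⟨L ++ [E1 R], by simp [hlen], ?_, ?_, ?_, ?_⟩
    · rw [List.pairwise_append]
      refine ⟨hpw, by simp, ?_⟩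
      intro A hA B hB x hx y hy
      simp only [List.mem_singleton] at hB
      subst hB
      have hxE : x ∈ Eacc j F := by
        rw [← hfold]; exact mem_foldr_union.2 ⟨A, hA, hx⟩
      exact hord x hxE y (E1_subset _ hy)
    · intro G hG
      rcases List.mem_append.1 hG with h | h
      · exact hsch G h
      · simp only [List.mem_singleton] at h
        subst h
        exact isSchreier_E1 hpos (Finset.sdiff_subset)
    · rw [foldr_union_append, hfold]
      simp [Eacc]
      rfl
    · intro x hx y hy
      show x < y
      rw [Finset.mem_sdiff] at hy
      have hyR : y ∈ R := by
        rw [hRdef, Finset.mem_sdiff]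
        exact ⟨hy.1, fun h => hy.2 (by simp [Eacc, Finset.mem_union, h])⟩
      rcases Finset.mem_union.1 (by simpa [Eacc] using hx) with h | h
      · exact hord x h y hyR
      · refine E1_initial x h y hyR ?_
        intro hyE
        exact hy.2 (by simp [Eacc, Finset.mem_union, hyE])

lemma insert_list (n : ℕ) (hn : 0 < n) :
    ∀ L : List (Finset ℕ), L.Pairwise FinsetLT → (∀ G ∈ L, IsSchreier G) →
      n ∉ L.foldr (· ∪ ·) ∅ →
      ∃ L' : List (Finset ℕ), L'.length ≤ L.length + 1 ∧ L'.Pairwise FinsetLT ∧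
        (∀ G ∈ L', IsSchreier G) ∧
        L'.foldr (· ∪ ·) ∅ = insert n (L.foldr (· ∪ ·) ∅) := by
  intro L
  induction L with
  | nil =>
    intro _ _ _
    refine ⟨[{n}], by simp, by simp, ?_, by simp⟩
    intro G hG
    simp only [List.mem_singleton] at hG
    subst hG
    intro m hm
    simp only [Finset.mem_singleton] at hm
    subst hm
    exact ⟨hn, by simpa using (show 1 ≤ m from hn)⟩
  | cons G L ih =>
    intro hpw hsch hnmem
    have hpwL : L.Pairwise FinsetLT := (List.pairwise_cons.1 hpw).2
    have hGL : ∀ X ∈ L, FinsetLT G X := (List.pairwise_cons.1 hpw).1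
    have hnG : n ∉ G := fun h => hnmem (by simp [h])
    have hnL : n ∉ L.foldr (· ∪ ·) ∅ := fun h => hnmem (by simp [h])
    have hGS : IsSchreier G := hsch G (by simp)
    by_cases h1 : ∃ y ∈ L.foldr (· ∪ ·) ∅, y < n
    · obtain ⟨L'', hlen, hpw'', hsch'', hfold''⟩ :=
        ih hpwL (fun X hX => hsch X (by simp [hX])) hnL
      refine ⟨G :: L'', by simpa using Nat.succ_le_succ hlen, ?_, ?_, ?_⟩
      · rw [List.pairwise_cons]
        refine ⟨?_, hpw''⟩
        intro X hX x hx y hy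
        have hyU : y ∈ insert n (L.foldr (· ∪ ·) ∅) := by
          rw [← hfold'']; exact mem_foldr_union.2 ⟨X, hX, hy⟩
        rcases Finset.mem_insert.1 hyU with rfl | hyL
        · obtain ⟨y0, hy0, hy0n⟩ := h1
          obtain ⟨X0, hX0, hyX0⟩ := mem_foldr_union.1 hy0
          exact lt_trans (hGL X0 hX0 x hx y0 hyX0) hy0n
        · obtain ⟨X0, hX0, hyX0⟩ := mem_foldr_union.1 hyL
          exact hGL X0 hX0 x hx y hyX0
      · intro X hX
        rcases List.mem_cons.1 hX with rfl | hX
        · exact hGS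
        · exact hsch'' X hX
      · show G ∪ L''.foldr (· ∪ ·) ∅ = insert n (G ∪ L.foldr (· ∪ ·) ∅)
        rw [hfold'', Finset.union_insert]
    · push_neg at h1
      have hnlt : ∀ y ∈ L.foldr (· ∪ ·) ∅, n < y := by
        intro y hy
        rcases lt_or_eq_of_le (h1 y hy) with h | h
        · exact h
        · exact absurd (h ▸ hy) hnL
      by_cases h2 : ∃ y ∈ G, y < n
      · obtain ⟨y0, hy0, hy0n⟩ := h2
        have hGne : (insert n G).Nonempty := ⟨n, Finset.mem_insert_self _ _⟩
        set M := (insert n G).max' hGne with hM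
        have hMmem : M ∈ insert n G := (insert n G).max'_mem hGne
        have hcardins : (insert n G).card = G.card + 1 := Finset.card_insert_of_notMem hnG
        have hcarder : ((insert n G).erase M).card = G.card := by
          rw [Finset.card_erase_of_mem hMmem, hcardins]; simp
        have hcardle : ∀ m ∈ insert n G, 0 < m ∧ G.card ≤ m := by
          intro m hm
          rcases Finset.mem_insert.1 hm with rfl | hm
          · exact ⟨hn, le_trans (hGS y0 hy0).2 (le_of_lt hy0n)⟩
          · exact hGS m hm
        have hM0 : 0 < M := (hcardle M hMmem).1
        have hltL : ∀ m ∈ insert n G, ∀ X ∈ L, ∀ y ∈ X, m < y := by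
          intro m hm X hX y hy
          rcases Finset.mem_insert.1 hm with rfl | hm
          · exact hnlt y (mem_foldr_union.2 ⟨X, hX, hy⟩)
          · exact hGL X hX m hm y hy
        refine ⟨(insert n G).erase M :: {M} :: L, by simp, ?_, ?_, ?_⟩
        · rw [List.pairwise_cons]
          constructor
          · intro X hX x hx
            have hxins : x ∈ insert n G := Finset.mem_of_mem_erase hx
            rcases List.mem_cons.1 hX with rfl | hX
            · intro y hy
              simp only [Finset.mem_singleton] at hy
              subst hy
              exact lt_of_le_of_ne ((insert n G).le_max' x hxins)
                (Finset.ne_of_mem_erase hx)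
            · exact fun y hy => hltL x hxins X hX y hy
          · rw [List.pairwise_cons]
            refine ⟨?_, hpwL⟩
            intro X hX x hx y hy
            simp only [Finset.mem_singleton] at hx
            subst hx
            exact hltL M hMmem X hX y hy
        · intro X hX
          rcases List.mem_cons.1 hX with rfl | hX
          · intro m hm
            have hm' : m ∈ insert n G := Finset.mem_of_mem_erase hm
            exact ⟨(hcardle m hm').1, hcarder ▸ (hcardle m hm').2⟩
          rcases List.mem_cons.1 hX with rfl | hX
          · intro m hm
            simp only [Finset.mem_singleton] at hm
            subst hm
            exact ⟨hM0, by simpa using (show 1 ≤ M from hM0)⟩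
          · exact hsch X (List.mem_cons_of_mem G hX)
        · show (insert n G).erase M ∪ ({M} ∪ L.foldr (· ∪ ·) ∅) =
            insert n (G ∪ L.foldr (· ∪ ·) ∅)
          rw [← Finset.union_assoc]
          have : (insert n G).erase M ∪ {M} = insert n G := by
            rw [Finset.union_comm, ← Finset.insert_eq, Finset.insert_erase hMmem]
          rw [this, Finset.insert_union]
      · push_neg at h2
        have hnltG : ∀ y ∈ G, n < y := by
          intro y hy
          rcases lt_or_eq_of_le (h2 y hy) with h | h
          · exact h
          · exact absurd (h ▸ hy) hnG
        refine ⟨{n} :: G :: L, by simp, ?_, ?_, ?_⟩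
        · rw [List.pairwise_cons]
          refine ⟨?_, hpw⟩
          intro X hX x hx y hy
          simp only [Finset.mem_singleton] at hx
          subst hx
          rcases List.mem_cons.1 hX with rfl | hX
          · exact hnltG y hy
          · exact hnlt y (mem_foldr_union.2 ⟨X, hX, hy⟩)
        · intro X hX
          rcases List.mem_cons.1 hX with rfl | hX
          · intro m hm
            simp only [Finset.mem_singleton] at hm
            subst hm
            exact ⟨hn, by simpa using (show 1 ≤ m from hn)⟩
          · exact hsch X hX
        · show {n} ∪ (G ∪ L.foldr (· ∪ ·) ∅) = insert n (G ∪ L.foldr (· ∪ ·) ∅)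
          rw [← Finset.insert_eq]

lemma combine_mono {d e : ℕ} {F : Finset ℕ} (h : Combine IsSchreier d F) (hde : d ≤ e) :
    Combine IsSchreier e F := by
  obtain ⟨L, h1, h2, h3, h4⟩ := h
  exact ⟨L, le_trans h1 hde, h2, h3, h4⟩

lemma combine_insert {d : ℕ} {F : Finset ℕ} (h : Combine IsSchreier d F)
    {n : ℕ} (hn : 0 < n) : Combine IsSchreier (d + 1) (insert n F) := by
  by_cases hnF : n ∈ F
  · rw [Finset.insert_eq_self.2 hnF]
    exact combine_mono h (Nat.le_succ d)
  · obtain ⟨L, h1, h2, h3, h4⟩ := h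
    obtain ⟨L', hlen, hpw, hsch, hfold⟩ := insert_list n hn L h2 h3 (h4 ▸ hnF)
    exact ⟨L', le_trans hlen (Nat.succ_le_succ h1), hpw, hsch, by rw [hfold, h4]⟩

theorem stmt15 (k : ℕ) (hk : 2 ≤ k) (a b : ℕ)
    (hab : ¬ Combine IsSchreier k (Finset.Icc a b))
    (F : Finset ℕ) (hF : FullAB (Combine IsSchreier k) a b F) :
    ∀ i, 1 ≤ i → i ≤ k - 1 → IsFull IsSchreier (Epiece i F) := by
  intro i hi1 hik
  obtain ⟨hFk, hFsub, haF, hmax⟩ := hF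
  have hpos : ∀ x ∈ F, 0 < x := by
    obtain ⟨L, _, _, hS, hU⟩ := hFk
    intro x hx
    rw [← hU] at hx
    obtain ⟨G, hG, hxG⟩ := mem_foldr_union.1 hx
    exact (hS G hG x hxG).1
  set R := F \ Eacc (i - 1) F with hRdef
  have key : ∃ h : R.Nonempty, R.min' h ≤ R.card := by
    by_contra hcon
    push_neg at hcon
    have hRS : IsSchreier R := by
      intro m hm
      have h1 : R.Nonempty := ⟨m, hm⟩
      refine ⟨hpos m (Finset.mem_sdiff.1 hm).1, ?_⟩
      exact le_trans (le_of_lt (hcon h1)) (Finset.min'_le R m hm)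
    -- F ∈ Combine IsSchreier i
    obtain ⟨L, hlen, hpw, hsch, hfold, hord⟩ := eacc_decomp F hpos (i - 1)
    have hFi : Combine IsSchreier i F := by
      refine ⟨L ++ [R], ?_, ?_, ?_, ?_⟩
      · simp [hlen]; omega
      · rw [List.pairwise_append]
        refine ⟨hpw, by simp, ?_⟩
        intro A hA B hB x hx y hy
        simp only [List.mem_singleton] at hB
        subst hB
        have hxE : x ∈ Eacc (i - 1) F := by
          rw [← hfold]; exact mem_foldr_union.2 ⟨A, hA, hx⟩
        exact hord x hxE y hy
      · intro G hG
        rcases List.mem_append.1 hG with h | h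
        · exact hsch G h
        · simp only [List.mem_singleton] at h
          subst h; exact hRS
      · rw [foldr_union_append, hfold]
        simp only [List.foldr_cons, List.foldr_nil, Finset.union_empty]
        exact Finset.union_sdiff_of_subset (eacc_subset F (i - 1))
    have hne : F ≠ Finset.Icc a b := fun h => hab (h ▸ hFk)
    obtain ⟨n, hnI, hnF⟩ : ∃ n ∈ Finset.Icc a b, n ∉ F := by
      by_contra h
      push_neg at h
      exact hne (Finset.Subset.antisymm hFsub h)
    have hn0 : 0 < n :=
      lt_of_lt_of_le (hpos a haF) (Finset.mem_Icc.1 hnI).1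
    exact hmax n hnI hnF
      (combine_mono (combine_insert hFi hn0) (by omega))
  obtain ⟨hRne, hcard⟩ := key
  have hm0 : 0 < R.min' hRne := hpos _ (Finset.mem_sdiff.1 (R.min'_mem hRne)).1
  have hEcard : (E1 R).card = R.min' hRne := by
    rw [E1_card hRne]
    exact min_eq_left hcard
  have hmemE : R.min' hRne ∈ E1 R := min'_mem_E1 hRne hm0
  have hE : Epiece i F = E1 R := rfl
  rw [hE]
  constructor
  · intro m hm
    have hmR : m ∈ R := E1_subset R hm
    refine ⟨hpos m (Finset.mem_sdiff.1 hmR).1, ?_⟩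
    rw [hEcard]
    exact Finset.min'_le R m hmR
  · intro n hn hnE hS
    have hcardins : (insert n (E1 R)).card = R.min' hRne + 1 := by
      rw [Finset.card_insert_of_notMem hnE, hEcard]
    rcases lt_or_ge n (R.min' hRne) with h | h
    · have := (hS n (Finset.mem_insert_self _ _)).2
      omega
    · have := (hS (R.min' hRne) (Finset.mem_insert_of_mem hmemE)).2
      omega
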